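/- Let k ≥ 2 be an even integer and let n be an integer with n ≥ k²/2 + k − 2. Set a(n,k) = (k−2)·n − (k−2)²/4, and let H be the bipartite graph with parts A = A₁ ⊔ A₂ and B = B₁ ⊔ B₂, where |A₂| = |B₁| = (k−2)/2 and |A₁| = |B₂| = n − (k−2)/2, whose edges are all pairs between A₁ and B₁ and all pairs between A₂ and B. Then every 2-edge coloring E(K_{n,n}) = R ⊔ B with at least a(n,k) edges in each color class either contains a balanced copy of K_{1,k} (a vertex incident to at least k/2 red edges and at least k/2 blue edges), or the graph induced by the edges of one of the two colors is isomorphic to H. -/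

import Mathlib

/-- The number of red edges in a 2-edge coloring of `K_{n,n}`.  The coloring is encoded
as `c : Fin n → Fin n → Bool`, where `c v w = true` means that the edge between vertex `v`
of the first part and vertex `w` of the second part is red, and `c v w = false` means it
is blue. -/
def redTotal {n : ℕ} (c : Fin n → Fin n → Bool) : ℕ :=
  (Finset.univ.filter fun p : Fin n × Fin n => c p.1 p.2 = true).card

/-- The number of blue edges in a 2-edge coloring of `K_{n,n}`. -/
def blueTotal {n : ℕ} (c : Fin n → Fin n → Bool) : ℕ :=
  (Finset.univ.filter fun p : Fin n × Fin n => c p.1 p.2 = false).card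

/-- The red degree of a vertex `v` of the first part of `K_{n,n}`. -/
def redDegL {n : ℕ} (c : Fin n → Fin n → Bool) (v : Fin n) : ℕ :=
  (Finset.univ.filter fun w : Fin n => c v w = true).card

/-- The blue degree of a vertex `v` of the first part of `K_{n,n}`. -/
def blueDegL {n : ℕ} (c : Fin n → Fin n → Bool) (v : Fin n) : ℕ :=
  (Finset.univ.filter fun w : Fin n => c v w = false).card

/-- The red degree of a vertex `w` of the second part of `K_{n,n}`. -/
def redDegR {n : ℕ} (c : Fin n → Fin n → Bool) (w : Fin n) : ℕ :=
  (Finset.univ.filter fun v : Fin n => c v w = true).card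

/-- The blue degree of a vertex `w` of the second part of `K_{n,n}`. -/
def blueDegR {n : ℕ} (c : Fin n → Fin n → Bool) (w : Fin n) : ℕ :=
  (Finset.univ.filter fun v : Fin n => c v w = false).card

/-- A balanced copy of the star `K_{1,k}` (`k` even) in the coloring `c`: a vertex of
`K_{n,n}` incident to at least `k/2` red edges and at least `k/2` blue edges. -/
def HasBalancedStar {n : ℕ} (c : Fin n → Fin n → Bool) (k : ℕ) : Prop :=
  (∃ v : Fin n, k / 2 ≤ redDegL c v ∧ k / 2 ≤ blueDegL c v) ∨
  (∃ w : Fin n, k / 2 ≤ redDegR c w ∧ k / 2 ≤ blueDegR c w)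

/-- A balanced copy of the star `K_{1,k+1}` (`k` even) in the coloring `c`: a vertex of
`K_{n,n}` incident to `k/2` edges of one color and `k/2 + 1` edges of the other. -/
def HasBalancedOddStar {n : ℕ} (c : Fin n → Fin n → Bool) (k : ℕ) : Prop :=
  (∃ v : Fin n, (k / 2 ≤ redDegL c v ∧ k / 2 + 1 ≤ blueDegL c v) ∨
                (k / 2 + 1 ≤ redDegL c v ∧ k / 2 ≤ blueDegL c v)) ∨
  (∃ w : Fin n, (k / 2 ≤ redDegR c w ∧ k / 2 + 1 ≤ blueDegR c w) ∨
                (k / 2 + 1 ≤ redDegR c w ∧ k / 2 ≤ blueDegR c w))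

open Finset

section aux
variable {n : ℕ}

lemma redDegL_le (c : Fin n → Fin n → Bool) (v : Fin n) : redDegL c v ≤ n := by
  simpa [redDegL] using Finset.card_filter_le (univ : Finset (Fin n)) (fun w => c v w = true)

lemma redDegR_le (c : Fin n → Fin n → Bool) (w : Fin n) : redDegR c w ≤ n := by
  simpa [redDegR] using Finset.card_filter_le (univ : Finset (Fin n)) (fun v => c v w = true)

lemma degL_add (c : Fin n → Fin n → Bool) (v : Fin n) : redDegL c v + blueDegL c v = n := by
  have := Finset.card_filter_add_card_filter_not (s := (univ : Finset (Fin n)))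
    (p := fun w => c v w = true)
  simpa [redDegL, blueDegL] using this

lemma degR_add (c : Fin n → Fin n → Bool) (w : Fin n) : redDegR c w + blueDegR c w = n := by
  have := Finset.card_filter_add_card_filter_not (s := (univ : Finset (Fin n)))
    (p := fun v => c v w = true)
  simpa [redDegR, blueDegR] using this

lemma redTotal_eq_sum_left (c : Fin n → Fin n → Bool) :
    redTotal c = ∑ v : Fin n, redDegL c v := by
  simp only [redTotal, redDegL, Finset.card_filter]
  rw [← Finset.univ_product_univ, Finset.sum_product]

lemma redTotal_eq_sum_right (c : Fin n → Fin n → Bool) :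
    redTotal c = ∑ w : Fin n, redDegR c w := by
  simp only [redTotal, redDegR, Finset.card_filter]
  rw [← Finset.univ_product_univ, Finset.sum_product]
  exact Finset.sum_comm

lemma blueTotal_eq_sum_left (c : Fin n → Fin n → Bool) :
    blueTotal c = ∑ v : Fin n, blueDegL c v := by
  simp only [blueTotal, blueDegL, Finset.card_filter]
  rw [← Finset.univ_product_univ, Finset.sum_product]

lemma blueTotal_eq_sum_right (c : Fin n → Fin n → Bool) :
    blueTotal c = ∑ w : Fin n, blueDegR c w := by
  simp only [blueTotal, blueDegR, Finset.card_filter]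
  rw [← Finset.univ_product_univ, Finset.sum_product]
  exact Finset.sum_comm

end aux
open Finset
section aux2
variable {n : ℕ}

lemma pair_bound (c : Fin n → Fin n → Bool) (X Y : Finset (Fin n)) (p q : ℕ)
    (hX : ∀ v ∈ X, ((Y.filter fun w => c v w = true)).card ≤ p)
    (hY : ∀ w ∈ Y, q ≤ ((X.filter fun v => c v w = true)).card) :
    Y.card * q ≤ X.card * p := by
  calc Y.card * q = ∑ _w ∈ Y, q := by rw [Finset.sum_const, smul_eq_mul]
    _ ≤ ∑ w ∈ Y, ((X.filter fun v => c v w = true)).card := Finset.sum_le_sum hY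
    _ = ∑ w ∈ Y, ∑ v ∈ X, if c v w = true then 1 else 0 := by
        simp only [Finset.card_filter]
    _ = ∑ v ∈ X, ∑ w ∈ Y, if c v w = true then 1 else 0 := Finset.sum_comm
    _ = ∑ v ∈ X, ((Y.filter fun w => c v w = true)).card := by
        simp only [Finset.card_filter]
    _ ≤ ∑ _v ∈ X, p := Finset.sum_le_sum hX
    _ = X.card * p := by rw [Finset.sum_const, smul_eq_mul]

lemma filt_le {α : Type*} [Fintype α] (S : Finset α) (p : α → Prop) [DecidablePred p] :
    (S.filter p).card ≤ (univ.filter p).card :=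
  Finset.card_le_card (Finset.filter_subset_filter _ (Finset.subset_univ S))

lemma filt_ge {α : Type*} [Fintype α] [DecidableEq α] (S : Finset α) (p : α → Prop)
    [DecidablePred p] :
    (univ.filter p).card ≤ (S.filter p).card + Sᶜ.card := by
  have h1 : univ.filter p ⊆ S.filter p ∪ Sᶜ := by
    intro x hx
    simp only [Finset.mem_filter, Finset.mem_union, Finset.mem_compl, Finset.mem_univ,
      true_and] at *
    tauto
  calc (univ.filter p).card ≤ (S.filter p ∪ Sᶜ).card := Finset.card_le_card h1
    _ ≤ _ := Finset.card_union_le _ _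

lemma all_eq_of_sum {α : Type*} {s : Finset α} {f : α → ℕ} {M : ℕ}
    (h : ∀ i ∈ s, f i ≤ M) (hs : s.card * M ≤ ∑ i ∈ s, f i) :
    ∀ i ∈ s, f i = M := by
  intro i hi
  by_contra hne
  have hlt : f i < M := lt_of_le_of_ne (h i hi) hne
  have : ∑ j ∈ s, f j < ∑ _j ∈ s, M := Finset.sum_lt_sum h ⟨i, hi, hlt⟩
  rw [Finset.sum_const, smul_eq_mul] at this
  omega
end aux2

section mainstruct
variable {n : ℕ}

lemma main_struct {t : ℕ} (c : Fin n → Fin n → Bool) (htn : t ≤ n)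
    (A B : Finset (Fin n))
    (hAin : ∀ v ∈ A, n - t ≤ redDegL c v)
    (hAout : ∀ v, v ∉ A → redDegL c v ≤ t)
    (hBin : ∀ w ∈ B, n - t ≤ redDegR c w)
    (hBout : ∀ w, w ∉ B → redDegR c w ≤ t)
    (hR : 2 * (t * n) - t * t ≤ redTotal c)
    (hAcard : A.card = t) (hBcard : B.card = t) :
    ∀ v w, c v w = true ↔ (v ∈ A ∨ w ∈ B) := by
  have hcompl : ∀ S : Finset (Fin n), Sᶜ.card = n - S.card := by
    intro S; rw [Finset.card_compl]; simp
  -- left side equalities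
  have hsplitL : ∑ v ∈ A, redDegL c v + ∑ v ∈ Aᶜ, redDegL c v = redTotal c := by
    rw [redTotal_eq_sum_left]; exact Finset.sum_add_sum_compl _ _
  have hup1 : ∑ v ∈ A, redDegL c v ≤ A.card * n :=
    le_trans (Finset.sum_le_sum fun v _ => redDegL_le c v) (by rw [Finset.sum_const, smul_eq_mul])
  have hup2 : ∑ v ∈ Aᶜ, redDegL c v ≤ Aᶜ.card * t :=
    le_trans (Finset.sum_le_sum fun v hv => hAout v (Finset.mem_compl.mp hv))
      (by rw [Finset.sum_const, smul_eq_mul])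
  have hAc : Aᶜ.card = n - t := by rw [hcompl, hAcard]
  have heq1 : A.card * n ≤ ∑ v ∈ A, redDegL c v ∧ Aᶜ.card * t ≤ ∑ v ∈ Aᶜ, redDegL c v := by
    simp only [hAcard, hAc] at hup1 hup2 ⊢
    have hkey : 2 * (t * n) - t * t ≤ t * n + (n - t) * t := by
      have : (n - t) * t = t * n - t * t := by
        rw [Nat.sub_mul]; ring_nf
      omega
    have h2 : t * n + (n - t) * t = 2 * (t * n) - t * t := by
      have : (n - t) * t = t * n - t * t := by rw [Nat.sub_mul]; ring_nf
      have htt : t * t ≤ t * n := Nat.mul_le_mul_left t htn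
      omega
    omega
  have hdegA : ∀ v ∈ A, redDegL c v = n := all_eq_of_sum (fun v _ => redDegL_le c v) heq1.1
  have hdegAc : ∀ v ∈ Aᶜ, redDegL c v = t :=
    all_eq_of_sum (fun v hv => hAout v (Finset.mem_compl.mp hv)) heq1.2
  -- right side equalities
  have hsplitR : ∑ w ∈ B, redDegR c w + ∑ w ∈ Bᶜ, redDegR c w = redTotal c := by
    rw [redTotal_eq_sum_right]; exact Finset.sum_add_sum_compl _ _
  have hup1R : ∑ w ∈ B, redDegR c w ≤ B.card * n :=
    le_trans (Finset.sum_le_sum fun w _ => redDegR_le c w) (by rw [Finset.sum_const, smul_eq_mul])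
  have hup2R : ∑ w ∈ Bᶜ, redDegR c w ≤ Bᶜ.card * t :=
    le_trans (Finset.sum_le_sum fun w hw => hBout w (Finset.mem_compl.mp hw))
      (by rw [Finset.sum_const, smul_eq_mul])
  have hBc : Bᶜ.card = n - t := by rw [hcompl, hBcard]
  have heq1R : B.card * n ≤ ∑ w ∈ B, redDegR c w ∧ Bᶜ.card * t ≤ ∑ w ∈ Bᶜ, redDegR c w := by
    simp only [hBcard, hBc] at hup1R hup2R ⊢
    have h2 : t * n + (n - t) * t = 2 * (t * n) - t * t := by
      have : (n - t) * t = t * n - t * t := by rw [Nat.sub_mul]; ring_nf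
      have htt : t * t ≤ t * n := Nat.mul_le_mul_left t htn
      omega
    omega
  have hdegB : ∀ w ∈ B, redDegR c w = n := all_eq_of_sum (fun w _ => redDegR_le c w) heq1R.1
  -- conclusions
  have hAfull : ∀ v ∈ A, ∀ w, c v w = true := by
    intro v hv w
    have h1 : (univ.filter fun w : Fin n => c v w = true) = univ := by
      apply Finset.eq_univ_of_card
      have := hdegA v hv
      simpa [redDegL] using this
    have : w ∈ univ.filter fun w : Fin n => c v w = true := by
      rw [h1]; exact Finset.mem_univ w
    simpa using this
  have hBfull : ∀ w ∈ B, ∀ v, c v w = true := by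
    intro w hw v
    have h1 : (univ.filter fun v : Fin n => c v w = true) = univ := by
      apply Finset.eq_univ_of_card
      have := hdegB w hw
      simpa [redDegR] using this
    have : v ∈ univ.filter fun v : Fin n => c v w = true := by
      rw [h1]; exact Finset.mem_univ v
    simpa using this
  intro v w
  constructor
  · intro hc
    by_contra hor
    push_neg at hor
    obtain ⟨hvA, hwB⟩ := hor
    have hdv : redDegL c v = t := hdegAc v (Finset.mem_compl.mpr hvA)
    have hBsub : B ⊆ univ.filter fun w' => c v w' = true := by
      intro w' hw'
      simp only [Finset.mem_filter, Finset.mem_univ, true_and]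
      exact hBfull w' hw' v
    have hBeq : B = univ.filter fun w' => c v w' = true := by
      apply Finset.eq_of_subset_of_card_le hBsub
      rw [hBcard]
      exact le_of_eq hdv
    have : w ∈ B := by
      rw [hBeq]
      simp [hc]
    exact hwB this
  · rintro (hv | hw)
    · exact hAfull v hv w
    · exact hBfull w hw v

end mainstruct

section arith

lemma lb_aux {t n a T : ℕ} (hn' : 2*(t*t) + 6*t + 2 ≤ n) (han : a ≤ n)
    (h1 : 2*(t*n) - t*t ≤ T) (h2 : T ≤ a*n + (n-a)*t) : t ≤ a := by
  have h1' : 2*(t*n) ≤ T + t*t := by omega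
  by_contra hcon
  push_neg at hcon
  have key : 2*(t*n) ≤ a*n + (n-a)*t + t*t := by omega
  zify [han] at key
  have h0 : (0:ℤ) ≤ (n:ℤ) := by positivity
  have h3 : (a:ℤ) + 1 ≤ t := by exact_mod_cast hcon
  have h4 : (2*(t*t) + 6*t + 2 : ℤ) ≤ n := by exact_mod_cast hn'
  nlinarith [mul_nonneg (show (0:ℤ) ≤ (t:ℤ) - a - 1 by linarith) h0,
    mul_nonneg (show (0:ℤ) ≤ (t:ℤ) by positivity) (show (0:ℤ) ≤ (a:ℤ) by positivity)]

lemma cases_contra_int (t n a b : ℤ) (ht : 0 ≤ t)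
    (hn' : 2*(t*t) + 6*t + 2 ≤ n) (hta : t ≤ a) (htb : t ≤ b)
    (hta' : a + t ≤ n) (htb' : b + t ≤ n)
    (Q1 : (b - t) * (n - a - t) ≤ t*t) (Q2 : (a - t) * (n - b - t) ≤ t*t)
    (h1 : t + 1 ≤ a ∨ t + 1 ≤ b) (h2 : t + 1 ≤ n - a ∨ t + 1 ≤ n - b) : False := by
  rcases h1 with h1 | h1 <;> rcases h2 with h2 | h2
  · -- t+1 ≤ a, t+1 ≤ n-a
    have e1 : b - t ≤ t*t := by
      nlinarith [mul_nonneg (show (0:ℤ) ≤ b - t by linarith) (show (0:ℤ) ≤ n - a - t - 1 by linarith)]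
    have e2 : n - b - t ≤ t*t := by
      nlinarith [mul_nonneg (show (0:ℤ) ≤ n - b - t by linarith) (show (0:ℤ) ≤ a - t - 1 by linarith)]
    linarith
  · -- t+1 ≤ a, t+1 ≤ n-b : Q2 both factors ≥ 1
    have e1 : a - t ≤ t*t := by
      nlinarith [mul_nonneg (show (0:ℤ) ≤ a - t by linarith) (show (0:ℤ) ≤ n - b - t - 1 by linarith)]
    have e2 : n - b - t ≤ t*t := by
      nlinarith [mul_nonneg (show (0:ℤ) ≤ n - b - t by linarith) (show (0:ℤ) ≤ a - t - 1 by linarith)]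
    -- now b - t ≥ n - 2t - t², n - a - t ≥ n - 2t - t², and (b-t)(n-a-t) ≤ t²
    have f1 : (t*t + 4*t + 2 : ℤ) ≤ b - t := by linarith
    have f2 : (t*t + 4*t + 2 : ℤ) ≤ n - a - t := by linarith
    nlinarith [mul_le_mul f1 f2 (by positivity) (by linarith)]
  · -- t+1 ≤ b, t+1 ≤ n-a : Q1 both factors ≥ 1
    have e1 : b - t ≤ t*t := by
      nlinarith [mul_nonneg (show (0:ℤ) ≤ b - t by linarith) (show (0:ℤ) ≤ n - a - t - 1 by linarith)]
    have e2 : n - a - t ≤ t*t := by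
      nlinarith [mul_nonneg (show (0:ℤ) ≤ n - a - t by linarith) (show (0:ℤ) ≤ b - t - 1 by linarith)]
    have f1 : (t*t + 4*t + 2 : ℤ) ≤ a - t := by linarith
    have f2 : (t*t + 4*t + 2 : ℤ) ≤ n - b - t := by linarith
    nlinarith [mul_le_mul f1 f2 (by positivity) (by linarith)]
  · -- t+1 ≤ b, t+1 ≤ n-b
    have e1 : n - a - t ≤ t*t := by
      nlinarith [mul_nonneg (show (0:ℤ) ≤ n - a - t by linarith) (show (0:ℤ) ≤ b - t - 1 by linarith)]
    have e2 : a - t ≤ t*t := by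
      nlinarith [mul_nonneg (show (0:ℤ) ≤ a - t by linarith) (show (0:ℤ) ≤ n - b - t - 1 by linarith)]
    linarith
end arith

section final
variable {n : ℕ}

lemma sum_bounds {t : ℕ} (d : Fin n → ℕ) (T : ℕ) (A : Finset (Fin n))
    (hT : T = ∑ v, d v) (hdn : ∀ v, d v ≤ n) (hAout : ∀ v, v ∉ A → d v ≤ t) :
    T ≤ A.card * n + Aᶜ.card * t := by
  rw [hT, ← Finset.sum_add_sum_compl A d]
  have h1 : ∑ v ∈ A, d v ≤ A.card * n :=
    le_trans (Finset.sum_le_sum fun v _ => hdn v) (by rw [Finset.sum_const, smul_eq_mul])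
  have h2 : ∑ v ∈ Aᶜ, d v ≤ Aᶜ.card * t :=
    le_trans (Finset.sum_le_sum fun v hv => hAout v (Finset.mem_compl.mp hv))
      (by rw [Finset.sum_const, smul_eq_mul])
  omega

lemma flip_redDegL (c : Fin n → Fin n → Bool) (v : Fin n) :
    redDegL (fun v w => !c v w) v = blueDegL c v := by
  simp [redDegL, blueDegL]

lemma flip_redDegR (c : Fin n → Fin n → Bool) (w : Fin n) :
    redDegR (fun v w => !c v w) w = blueDegR c w := by
  simp [redDegR, blueDegR]

lemma flip_redTotal (c : Fin n → Fin n → Bool) :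
    redTotal (fun v w => !c v w) = blueTotal c := by
  simp [redTotal, blueTotal]

end final


/-- final -/
theorem bbal_stars_characterization (k n : ℕ) (hk2 : 2 ≤ k) (hkeven : Even k)
    (hn : k ^ 2 / 2 + k - 2 ≤ n) :
    ∀ c : Fin n → Fin n → Bool,
      (k - 2) * n - (k - 2) ^ 2 / 4 ≤ redTotal c →
      (k - 2) * n - (k - 2) ^ 2 / 4 ≤ blueTotal c →
      HasBalancedStar c k ∨
      (∃ (b : Bool) (A₂ B₁ : Finset (Fin n)),
        A₂.card = (k - 2) / 2 ∧ B₁.card = (k - 2) / 2 ∧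
        ((∀ v w, c v w = b ↔ (v ∈ A₂ ∨ w ∈ B₁)) ∨
         (∀ v w, c v w = b ↔ (w ∈ A₂ ∨ v ∈ B₁)))) := by
  intro c hRed hBlue
  by_cases hstar : HasBalancedStar c k
  · exact Or.inl hstar
  right
  obtain ⟨m, hm⟩ := hkeven
  have hm1 : 1 ≤ m := by omega
  set t := m - 1 with htdef
  have hk : k = 2 * t + 2 := by omega
  have hksq : k ^ 2 = 4 * (t * t) + 8 * t + 4 := by rw [hk]; ring
  have hn' : 2 * (t * t) + 6 * t + 2 ≤ n := by omega
  have hkd : (k - 2) / 2 = t := by omega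
  have he1 : (k - 2) * n = 2 * (t * n) := by rw [show k - 2 = 2*t by omega]; ring
  have he2 : (k - 2) ^ 2 / 4 = t * t := by
    rw [show k - 2 = 2*t by omega, show (2*t)^2 = 4*(t*t) by ring]; omega
  rw [he1, he2] at hRed hBlue
  have hk2div : k / 2 = t + 1 := by omega
  -- classification
  rw [HasBalancedStar, not_or] at hstar
  obtain ⟨hstarL, hstarR⟩ := hstar
  push_neg at hstarL hstarR
  have classL : ∀ v, redDegL c v ≤ t ∨ n - t ≤ redDegL c v := by
    intro v
    have h1 := degL_add c v
    have h2 := hstarL v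
    rw [hk2div] at h2
    omega
  have classR : ∀ w, redDegR c w ≤ t ∨ n - t ≤ redDegR c w := by
    intro w
    have h1 := degR_add c w
    have h2 := hstarR w
    rw [hk2div] at h2
    omega
  classical
  set A : Finset (Fin n) := univ.filter (fun v => n - t ≤ redDegL c v) with hAdef
  set B : Finset (Fin n) := univ.filter (fun w => n - t ≤ redDegR c w) with hBdef
  have hAin : ∀ v ∈ A, n - t ≤ redDegL c v := by
    intro v hv; rw [hAdef, Finset.mem_filter] at hv; exact hv.2
  have hAout : ∀ v, v ∉ A → redDegL c v ≤ t := by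
    intro v hv
    rw [hAdef, Finset.mem_filter] at hv
    rcases classL v with h | h
    · exact h
    · exact absurd ⟨Finset.mem_univ v, h⟩ hv
  have hBin : ∀ w ∈ B, n - t ≤ redDegR c w := by
    intro w hw; rw [hBdef, Finset.mem_filter] at hw; exact hw.2
  have hBout : ∀ w, w ∉ B → redDegR c w ≤ t := by
    intro w hw
    rw [hBdef, Finset.mem_filter] at hw
    rcases classR w with h | h
    · exact h
    · exact absurd ⟨Finset.mem_univ w, h⟩ hw
  have hcompl : ∀ S : Finset (Fin n), Sᶜ.card = n - S.card := by
    intro S; rw [Finset.card_compl]; simp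
  have hAn : A.card ≤ n := by simpa using Finset.card_le_univ A
  have hBn : B.card ≤ n := by simpa using Finset.card_le_univ B
  -- blue-side degree facts
  have hAcin : ∀ v ∈ Aᶜ, n - t ≤ blueDegL c v := by
    intro v hv
    have := hAout v (Finset.mem_compl.mp hv)
    have h1 := degL_add c v
    omega
  have hAcout : ∀ v, v ∉ Aᶜ → blueDegL c v ≤ t := by
    intro v hv
    rw [Finset.notMem_compl] at hv
    have := hAin v hv
    have h1 := degL_add c v
    have h2 : 2 * t ≤ n := by omega
    omega
  have hBcin : ∀ w ∈ Bᶜ, n - t ≤ blueDegR c w := by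
    intro w hw
    have := hBout w (Finset.mem_compl.mp hw)
    have h1 := degR_add c w
    omega
  have hBcout : ∀ w, w ∉ Bᶜ → blueDegR c w ≤ t := by
    intro w hw
    rw [Finset.notMem_compl] at hw
    have := hBin w hw
    have h1 := degR_add c w
    have h2 : 2 * t ≤ n := by omega
    omega
  -- lower bounds on the four set sizes
  have blueDegL_le : ∀ v, blueDegL c v ≤ n := by
    intro v; have := degL_add c v; omega
  have blueDegR_le : ∀ w, blueDegR c w ≤ n := by
    intro w; have := degR_add c w; omega
  have hta : t ≤ A.card := by
    refine lb_aux hn' hAn hRed ?_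
    have := sum_bounds (redDegL c) (redTotal c) A (redTotal_eq_sum_left c)
      (redDegL_le c) hAout
    rwa [hcompl A] at this
  have htb : t ≤ B.card := by
    refine lb_aux hn' hBn hRed ?_
    have := sum_bounds (redDegR c) (redTotal c) B (redTotal_eq_sum_right c)
      (redDegR_le c) hBout
    rwa [hcompl B] at this
  have htac : t ≤ n - A.card := by
    have hAcn : Aᶜ.card ≤ n := by simpa using Finset.card_le_univ Aᶜ
    have h := lb_aux hn' hAcn hBlue ?h2
    · rwa [hcompl A] at h
    case h2 =>
      have := sum_bounds (blueDegL c) (blueTotal c) Aᶜ (blueTotal_eq_sum_left c)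
        blueDegL_le hAcout
      rwa [hcompl Aᶜ] at this
  have htbc : t ≤ n - B.card := by
    have hBcn : Bᶜ.card ≤ n := by simpa using Finset.card_le_univ Bᶜ
    have h := lb_aux hn' hBcn hBlue ?h2
    · rwa [hcompl B] at h
    case h2 =>
      have := sum_bounds (blueDegR c) (blueTotal c) Bᶜ (blueTotal_eq_sum_right c)
        blueDegR_le hBcout
      rwa [hcompl Bᶜ] at this
  -- the two pair bounds
  have P1 : B.card * (n - t - A.card) ≤ (n - A.card) * t := by
    have h := pair_bound c Aᶜ B t (n - t - A.card) ?hX ?hY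
    · rwa [hcompl A] at h
    case hX =>
      intro v hv
      calc ((B.filter fun w => c v w = true)).card ≤ redDegL c v :=
            filt_le B (fun w => c v w = true)
        _ ≤ t := hAout v (Finset.mem_compl.mp hv)
    case hY =>
      intro w hw
      have h1 : redDegR c w ≤ ((Aᶜ.filter fun v => c v w = true)).card + A.card := by
        have := filt_ge Aᶜ (fun v => c v w = true)
        rwa [compl_compl] at this
      have h2 := hBin w hw
      omega
  have P2 : A.card * (n - t - B.card) ≤ (n - B.card) * t := by
    have h := pair_bound (fun v w => c w v) Bᶜ A t (n - t - B.card) ?hX ?hY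
    · rwa [hcompl B] at h
    case hX =>
      intro v hv
      show ((A.filter fun w => c w v = true)).card ≤ t
      calc ((A.filter fun w => c w v = true)).card ≤ redDegR c v :=
            filt_le A (fun u => c u v = true)
        _ ≤ t := hBout v (Finset.mem_compl.mp hv)
    case hY =>
      intro w hw
      show n - t - B.card ≤ ((Bᶜ.filter fun v => c w v = true)).card
      have h1 : redDegL c w ≤ ((Bᶜ.filter fun v => c w v = true)).card + B.card := by
        have := filt_ge Bᶜ (fun v => c w v = true)
        rwa [compl_compl] at this
      have h2 := hAin w hw
      omega
  -- case analysis
  by_cases hred : A.card = t ∧ B.card = t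
  · refine ⟨true, A, B, by rw [hkd]; exact hred.1, by rw [hkd]; exact hred.2, Or.inl ?_⟩
    exact main_struct c (by omega) A B hAin hAout hBin hBout hRed hred.1 hred.2
  by_cases hblue : n - A.card = t ∧ n - B.card = t
  · have hAc : Aᶜ.card = t := by rw [hcompl A]; exact hblue.1
    have hBc : Bᶜ.card = t := by rw [hcompl B]; exact hblue.2
    have hmain := main_struct (fun v w => !c v w) (by omega : t ≤ n) Aᶜ Bᶜ
      (fun v hv => by rw [flip_redDegL]; exact hAcin v hv)
      (fun v hv => by rw [flip_redDegL]; exact hAcout v hv)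
      (fun w hw => by rw [flip_redDegR]; exact hBcin w hw)
      (fun w hw => by rw [flip_redDegR]; exact hBcout w hw)
      (by rw [flip_redTotal]; exact hBlue) hAc hBc
    refine ⟨false, Aᶜ, Bᶜ, by rw [hkd]; exact hAc, by rw [hkd]; exact hBc, Or.inl ?_⟩
    intro v w
    have := hmain v w
    simp only [Bool.not_eq_true'] at this
    exact this
  · exfalso
    -- integer versions
    have h3 : A.card + t ≤ n := by omega
    have h4 : B.card + t ≤ n := by omega
    have Q1 : ((B.card:ℤ) - t) * ((n:ℤ) - A.card - t) ≤ (t:ℤ)*t := by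
      have hP1 : ((B.card:ℤ)) * ((n:ℤ) - t - A.card) ≤ ((n:ℤ) - A.card) * t := by
        have e1 : ((n - t - A.card : ℕ) : ℤ) = (n:ℤ) - t - A.card := by omega
        have e2 : ((n - A.card : ℕ) : ℤ) = (n:ℤ) - A.card := by omega
        have h' : ((B.card : ℕ):ℤ) * ((n - t - A.card : ℕ):ℤ)
            ≤ ((n - A.card : ℕ):ℤ) * ((t:ℕ):ℤ) := by exact_mod_cast P1
        rw [e1, e2] at h'; exact h'
      have heq : ((B.card:ℤ) - t) * ((n:ℤ) - A.card - t)
          = (B.card:ℤ) * ((n:ℤ) - t - A.card) - ((n:ℤ) - A.card) * t + (t:ℤ)*t := by ring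
      linarith [hP1, heq]
    have Q2 : ((A.card:ℤ) - t) * ((n:ℤ) - B.card - t) ≤ (t:ℤ)*t := by
      have hP2 : ((A.card:ℤ)) * ((n:ℤ) - t - B.card) ≤ ((n:ℤ) - B.card) * t := by
        have e1 : ((n - t - B.card : ℕ) : ℤ) = (n:ℤ) - t - B.card := by omega
        have e2 : ((n - B.card : ℕ) : ℤ) = (n:ℤ) - B.card := by omega
        have h' : ((A.card : ℕ):ℤ) * ((n - t - B.card : ℕ):ℤ)
            ≤ ((n - B.card : ℕ):ℤ) * ((t:ℕ):ℤ) := by exact_mod_cast P2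
        rw [e1, e2] at h'; exact h'
      have heq : ((A.card:ℤ) - t) * ((n:ℤ) - B.card - t)
          = (A.card:ℤ) * ((n:ℤ) - t - B.card) - ((n:ℤ) - B.card) * t + (t:ℤ)*t := by ring
      linarith [hP2, heq]
    refine cases_contra_int t n A.card B.card (by positivity) (by exact_mod_cast hn')
      (by exact_mod_cast hta) (by exact_mod_cast htb)
      (by exact_mod_cast h3) (by exact_mod_cast h4) Q1 Q2 ?_ ?_
    · have : t + 1 ≤ A.card ∨ t + 1 ≤ B.card := by omega
      rcases this with h | h
      · left; exact_mod_cast h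
      · right; exact_mod_cast h
    · have h5 : t + 1 ≤ n - A.card ∨ t + 1 ≤ n - B.card := by omega
      rcases h5 with h | h
      · left; omega
      · right; omega
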